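/- For a perfect fluid on a warped product spacetime, if the stress-energy tensor T = (p+ρ)ξ⊗ξ + p g̃ is block diagonal with respect to the warped product splitting (as forced by Einstein's equations), then the unit timelike velocity field ξ must be tangent to the base Q, and consequently the fiber block T_F is proportional to h. -/
import Mathlib


/-- For a perfect fluid on a warped product spacetime `M = Q ×_r F` with
`g̃ = g + r² h`, if the stress-energy tensor `T = (p+ρ) ξ^♭ ⊗ ξ^♭ + p g̃` is block
diagonal with respect to the warped product splitting `TQ ⊕ TF` (as forced by
Einstein's equations), then the unit timelike velocity field `ξ` must be tangent to
the base `Q` (its fiber component vanishes), and consequently the fiber block `T_F`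
is proportional to `h`. -/
theorem fluid_velocity_tangent_to_base
    {VQ VF : Type*} [AddCommGroup VQ] [Module ℝ VQ]
    [AddCommGroup VF] [Module ℝ VF]
    (p ρ r : ℝ) (hr : 0 < r) (hpρ : 0 < p + ρ)
    (g : VQ →ₗ[ℝ] VQ →ₗ[ℝ] ℝ)                -- the Lorentzian base metric
    (hgnondeg : ∀ x : VQ, (∀ y, g x y = 0) → x = 0)
    (h : VF →ₗ[ℝ] VF →ₗ[ℝ] ℝ)                -- the Riemannian fiber metric
    (hhsymm : ∀ v w, h v w = h w v)
    (hhpos : ∀ v, 0 ≤ h v v)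
    (hhdef : ∀ v, h v v = 0 → v = 0)           -- h is positive definite
    (ξ : VQ × VF)                               -- the fluid velocity
    (gt : VQ × VF → VQ × VF → ℝ)               -- the warped metric g̃ = g + r²h
    (hgt : ∀ X Y, gt X Y = g X.1 Y.1 + r ^ 2 * h X.2 Y.2)
    (hunit : gt ξ ξ = -1)                       -- ξ is unit timelike
    (T : VQ × VF → VQ × VF → ℝ)                -- the perfect-fluid stress tensor
    (hT : ∀ X Y, T X Y = (p + ρ) * gt ξ X * gt ξ Y + p * gt X Y)
    -- T is block diagonal with respect to TQ ⊕ TF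
    (hblock : ∀ (x : VQ) (w : VF), T (x, 0) (0, w) = 0) :
    ξ.2 = 0 ∧ ∃ c : ℝ, ∀ v w : VF, T (0, v) (0, w) = c * h v w := by
  have key : ∀ (x : VQ) (w : VF), g ξ.1 x * h ξ.2 w = 0 := by
    intro x w
    have := hblock x w
    simp only [hT, hgt] at this
    simp only [map_zero, LinearMap.zero_apply, mul_zero, zero_add, add_zero] at this
    have hpr : (p + ρ) ≠ 0 := ne_of_gt hpρ
    have hr2 : r ^ 2 ≠ 0 := pow_ne_zero _ (ne_of_gt hr)
    have : (p + ρ) * r ^ 2 * (g ξ.1 x * h ξ.2 w) = 0 := by linarith [this]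
    rcases mul_eq_zero.mp this with h1 | h1
    · exact absurd h1 (mul_ne_zero hpr hr2)
    · exact h1
  have hξ2 : ξ.2 = 0 := by
    by_contra hne
    have hh : h ξ.2 ξ.2 ≠ 0 := fun hz => hne (hhdef _ hz)
    have hg0 : ∀ x : VQ, g ξ.1 x = 0 := fun x =>
      (mul_eq_zero.mp (key x ξ.2)).resolve_right hh
    have hξ1 : ξ.1 = 0 := hgnondeg _ hg0
    have := hunit
    rw [hgt, hξ1] at this
    simp at this
    nlinarith [hhpos ξ.2, sq_nonneg r]
  refine ⟨hξ2, p * r ^ 2, fun v w => ?_⟩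
  rw [hT, hgt, hgt, hgt, hξ2]
  simp
  ring
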